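/- On a finite graph (S,E) with graph diameter D_G ≥ 2, let L be a nearest-neighbor generator with minimal total jump rate λ* = inf_x λ(x) > 0 and maximal degree d_L = sup_x max_{y~x} λ(x)/J(x,y) > 2. Then every nonzero eigenvalue λ of -L (in ℂ) satisfies Re(λ) ≥ 2λ*(d_L - 2)/(d_L·(Σ_{k=1}^{D_G}(d_L - 1)^k - D_G)). -/

import Mathlib

namespace Stmt18Aux

noncomputable def del (dL : ℝ) (D k : ℕ) : ℝ := ((dL - 1) ^ (D + 1 - k) - 1) / (dL - 2)

noncomputable def rho (dL : ℝ) (D n : ℕ) : ℝ := ∑ k ∈ Finset.Icc 1 n, del dL D k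

variable {dL : ℝ} {D : ℕ}

lemma del_nonneg (h : 2 < dL) (k : ℕ) : 0 ≤ del dL D k := by
  have h1 : (1 : ℝ) ≤ (dL - 1) ^ (D + 1 - k) := one_le_pow₀ (by linarith)
  exact div_nonneg (by linarith) (by linarith)

lemma del_pos (h : 2 < dL) {k : ℕ} (hk : k ≤ D) : 0 < del dL D k := by
  have h1 : (1 : ℝ) < (dL - 1) ^ (D + 1 - k) :=
    one_lt_pow₀ (by linarith) (by omega)
  exact div_pos (by linarith) (by linarith)

lemma del_succ (h : 2 < dL) {n : ℕ} (hn : n ≤ D) :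
    (dL - 1) * del dL D (n + 1) = del dL D n - 1 := by
  have h1 : D + 1 - n = (D + 1 - (n + 1)) + 1 := by omega
  rw [del, del, h1, pow_succ]
  have h2 : dL - 2 ≠ 0 := by linarith
  field_simp
  ring

lemma rho_zero : rho dL D 0 = 0 := by simp [rho]

lemma rho_succ (n : ℕ) : rho dL D (n + 1) = rho dL D n + del dL D (n + 1) := by
  rw [rho, rho, Finset.sum_Icc_succ_top (by omega)]

lemma rho_mono (h : 2 < dL) {m n : ℕ} (hmn : m ≤ n) : rho dL D m ≤ rho dL D n := by
  apply Finset.sum_le_sum_of_subset_of_nonneg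
  · exact Finset.Icc_subset_Icc_right hmn
  · intro k _ _; exact del_nonneg h k

lemma rho_pos (h : 2 < dL) (hD : 1 ≤ D) {n : ℕ} (hn : 1 ≤ n) : 0 < rho dL D n := by
  have h1 : 0 < rho dL D 1 := by
    simp [rho, Finset.Icc_self]
    exact del_pos h hD
  exact lt_of_lt_of_le h1 (rho_mono h hn)

lemma rho_D (h : 2 < dL) : rho dL D D = ((∑ k ∈ Finset.Icc 1 D, (dL - 1) ^ k) - D) / (dL - 2) := by
  have hre : ∑ k ∈ Finset.Icc 1 D, (dL - 1) ^ (D + 1 - k) = ∑ k ∈ Finset.Icc 1 D, (dL - 1) ^ k := by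
    apply Finset.sum_nbij' (fun k => D + 1 - k) (fun k => D + 1 - k) <;>
      intro a ha <;> simp_all [Finset.mem_Icc] <;> omega
  have h2 : dL - 2 ≠ 0 := by linarith
  rw [rho]
  simp only [del, sub_div]
  rw [Finset.sum_sub_distrib, ← Finset.sum_div, hre, Finset.sum_const, Nat.card_Icc]
  simp
  ring


lemma geo_step {S : Type*} {G : SimpleGraph S} (hconn : G.Connected) {x y : S} (hxy : x ≠ y) :
    ∃ z, G.Adj x z ∧ G.dist z y + 1 = G.dist x y := by
  obtain ⟨p, hp⟩ := hconn.exists_walk_length_eq_dist x y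
  cases p with
  | nil => exact absurd hp.symm (by simpa using (hconn.pos_dist_of_ne hxy).ne')
  | cons h q =>
    rename_i z₀
    refine ⟨z₀, h, le_antisymm ?_ ?_⟩
    · have h1 : G.dist z₀ y ≤ q.length := SimpleGraph.dist_le q
      simp only [SimpleGraph.Walk.length_cons] at hp
      omega
    · have h2 : G.dist x z₀ ≤ 1 := by
        simpa using SimpleGraph.dist_le (SimpleGraph.Walk.cons h SimpleGraph.Walk.nil)
      have h3 := hconn.dist_triangle (u := x) (v := z₀) (w := y)
      omega

lemma key_lemma {S : Type*} [Fintype S] [DecidableEq S]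
    (G : SimpleGraph S) (hconn : G.Connected)
    (D : ℕ) (hD2 : 2 ≤ D) (hDub : ∀ x y, G.dist x y ≤ D)
    (J : S → S → ℝ) (hJnn : ∀ x y, 0 ≤ J x y)
    (hJadj : ∀ x y, 0 < J x y ↔ G.Adj x y)
    (lamstar dL : ℝ)
    (hstarpos : 0 < lamstar) (hdL2 : 2 < dL)
    (hlam_ge : ∀ x, lamstar ≤ ∑ y, J x y)
    (hJle : ∀ x y, G.Adj x y → (∑ z, J x z) ≤ dL * J x y)
    {x y : S} (hxy : x ≠ y) :
    ∑ z, J x z * rho dL D (G.dist z y) ≤ (∑ z, J x z) * rho dL D (G.dist x y) - lamstar / dL := by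
  set n := G.dist x y with hn
  have hn1 : 1 ≤ n := hconn.pos_dist_of_ne hxy
  have hnD : n ≤ D := hDub x y
  obtain ⟨z₀, hadj, hz₀⟩ := geo_step hconn hxy
  have hJ0 : 0 < J x z₀ := (hJadj x z₀).2 hadj
  have hJ0le : (∑ z, J x z) ≤ dL * J x z₀ := hJle x z₀ hadj
  have hdLpos : (0:ℝ) < dL := by linarith
  -- per-term bound
  have hterm : ∀ z, J x z * rho dL D (G.dist z y) ≤ J x z * (rho dL D n + del dL D (n+1)) := by
    intro z
    rcases (hJnn x z).eq_or_lt with h0 | h0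
    · rw [← h0]; simp
    · apply mul_le_mul_of_nonneg_left _ h0.le
      have hadjz : G.Adj x z := (hJadj x z).1 h0
      have hzyD : G.dist z y ≤ D := hDub z y
      have htri : G.dist z y ≤ n + 1 := by
        calc G.dist z y ≤ G.dist z x + G.dist x y := hconn.dist_triangle
          _ ≤ 1 + n := by
              have : G.dist z x ≤ 1 :=
                SimpleGraph.dist_le (SimpleGraph.Walk.cons hadjz.symm SimpleGraph.Walk.nil)
              omega
          _ = n + 1 := by omega
      rcases le_or_gt (G.dist z y) n with hle | hlt
      · have := rho_mono hdL2 (D := D) hle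
        have := del_nonneg hdL2 (D := D) (n+1)
        linarith
      · have heq : G.dist z y = n + 1 := by omega
        rw [heq, rho_succ]
  -- split the sum at z₀
  have hsplit : ∑ z, J x z * rho dL D (G.dist z y)
      = J x z₀ * rho dL D (G.dist z₀ y)
        + ∑ z ∈ Finset.univ.erase z₀, J x z * rho dL D (G.dist z y) :=
    (Finset.add_sum_erase _ _ (Finset.mem_univ z₀)).symm
  have hsplitJ : (∑ z, J x z) = J x z₀ + ∑ z ∈ Finset.univ.erase z₀, J x z :=
    (Finset.add_sum_erase _ _ (Finset.mem_univ z₀)).symm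
  have hrest : ∑ z ∈ Finset.univ.erase z₀, J x z * rho dL D (G.dist z y)
      ≤ (∑ z ∈ Finset.univ.erase z₀, J x z) * (rho dL D n + del dL D (n+1)) := by
    rw [Finset.sum_mul]
    exact Finset.sum_le_sum fun z _ => hterm z
  -- rho values
  have hz₀rho : rho dL D (G.dist z₀ y) = rho dL D n - del dL D n := by
    have h : n = (G.dist z₀ y) + 1 := by omega
    rw [h, rho_succ]; ring
  -- final algebra
  have hds : (dL - 1) * del dL D (n + 1) = del dL D n - 1 := del_succ hdL2 hnD
  have hdn : 0 ≤ del dL D n := del_nonneg hdL2 n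
  have hdn1 : 0 ≤ del dL D (n+1) := del_nonneg hdL2 (n+1)
  have hlamx : lamstar ≤ ∑ z, J x z := hlam_ge x
  set Λ := ∑ z, J x z with hΛ
  set R := ∑ z ∈ Finset.univ.erase z₀, J x z with hR
  have hRval : R = Λ - J x z₀ := by rw [hsplitJ]; ring
  rw [hsplit, hz₀rho]
  rw [hRval] at hrest
  have hkey0 : J x z₀ * (rho dL D n - del dL D n) + (Λ - J x z₀) * (rho dL D n + del dL D (n+1))
      ≤ Λ * rho dL D n - lamstar / dL := by
    have h1 := mul_le_mul_of_nonneg_right hJ0le (add_nonneg hdn hdn1)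
    have hq : lamstar / dL * dL = lamstar := div_mul_cancel₀ _ hdLpos.ne'
    nlinarith [h1, hq, hds, hlamx, hdLpos]
  calc J x z₀ * (rho dL D n - del dL D n) + ∑ z ∈ Finset.univ.erase z₀, J x z * rho dL D (G.dist z y)
      ≤ J x z₀ * (rho dL D n - del dL D n) + (Λ - J x z₀) * (rho dL D n + del dL D (n+1)) := by
        linarith [hrest]
    _ ≤ Λ * rho dL D n - lamstar / dL := hkey0

end Stmt18Aux

open Stmt18Aux

/-- Estimate of eigenvalues in terms of degree and diameter: on a finite connected
graph of diameter `D ≥ 2`, for a nearest-neighbor generator `L` with jump rates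
`J`, minimal total jump rate `λ* > 0` and maximal degree
`d_L = sup_x max_{y ~ x} λ(x)/J(x,y) > 2`, every nonzero eigenvalue `μ` of `-L`
in `ℂ` satisfies `Re μ ≥ 2 λ* (d_L - 2) / (d_L (∑_{k=1}^{D} (d_L-1)^k - D))`. -/
theorem stmt18 {S : Type*} [Fintype S] [DecidableEq S] [Nonempty S]
    (G : SimpleGraph S) (hconn : G.Connected)
    (D : ℕ) (hD2 : 2 ≤ D) (hDub : ∀ x y, G.dist x y ≤ D) (hDach : ∃ x y, G.dist x y = D)
    (J : S → S → ℝ) (hJnn : ∀ x y, 0 ≤ J x y) (hJd : ∀ x, J x x = 0)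
    (hJadj : ∀ x y, 0 < J x y ↔ G.Adj x y)
    (lamstar dL : ℝ)
    (hstar : IsGLB (Set.range fun x => ∑ y, J x y) lamstar)
    (hstarpos : 0 < lamstar)
    (hdL : IsLUB {r : ℝ | ∃ x y, G.Adj x y ∧ r = (∑ z, J x z) / J x y} dL)
    (hdL2 : 2 < dL)
    (μ : ℂ) (hμ : μ ≠ 0)
    (hev : ∃ f : S → ℂ, f ≠ 0 ∧ ∀ x, -(∑ y, (J x y : ℂ) * (f y - f x)) = μ * f x) :
    2 * lamstar * (dL - 2) / (dL * ((∑ k ∈ Finset.Icc 1 D, (dL - 1) ^ k) - D)) ≤ μ.re := by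
  obtain ⟨f, hf0, heq⟩ := hev
  have hdLpos : (0:ℝ) < dL := by linarith
  have hlam_ge : ∀ x, lamstar ≤ ∑ y, J x y := fun x => hstar.1 ⟨x, rfl⟩
  have hJle : ∀ x y, G.Adj x y → (∑ z, J x z) ≤ dL * J x y := by
    intro x y h
    have hJ : 0 < J x y := (hJadj x y).2 h
    have h2 : (∑ z, J x z) / J x y ≤ dL := hdL.1 ⟨x, y, h, rfl⟩
    rw [div_le_iff₀ hJ] at h2
    linarith [h2]
  -- f is nonconstant
  have hnc : ∃ a b : S, f a ≠ f b := by
    by_contra hcon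
    push_neg at hcon
    apply hf0
    funext x
    have h0 := heq x
    have hz : ∀ y ∈ Finset.univ, (J x y : ℂ) * (f y - f x) = 0 := fun y _ => by
      rw [hcon y x]; ring
    rw [Finset.sum_congr rfl hz] at h0
    simp only [Finset.sum_const, smul_zero, neg_zero] at h0
    rcases mul_eq_zero.1 h0.symm with h | h
    · exact absurd h hμ
    · simpa using h
  obtain ⟨a, b, hab⟩ := hnc
  have hρpos : ∀ {n : ℕ}, 1 ≤ n → 0 < rho dL D n := fun hn => rho_pos hdL2 (by omega) hn
  -- maximizing pair
  obtain ⟨p₀, -, hp₀⟩ := Finset.exists_max_image Finset.univ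
    (fun p : S × S => ‖f p.1 - f p.2‖ / rho dL D (G.dist p.1 p.2))
    ⟨(a, b), Finset.mem_univ _⟩
  set x₀ := p₀.1
  set y₀ := p₀.2
  set M := ‖f x₀ - f y₀‖ / rho dL D (G.dist x₀ y₀) with hM
  have habne : a ≠ b := fun h => hab (by rw [h])
  have hFab : 0 < ‖f a - f b‖ / rho dL D (G.dist a b) := by
    apply div_pos
    · simpa [sub_eq_zero] using hab
    · exact hρpos (hconn.pos_dist_of_ne habne)
  have hMpos : 0 < M := lt_of_lt_of_le hFab (hp₀ (a, b) (Finset.mem_univ _))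
  have hx₀y₀ : x₀ ≠ y₀ := by
    intro h
    rw [hM, h] at hMpos
    simp at hMpos
  set n₀ := G.dist x₀ y₀ with hn₀
  have hn₀1 : 1 ≤ n₀ := hconn.pos_dist_of_ne hx₀y₀
  have hρ₀pos : 0 < rho dL D n₀ := hρpos hn₀1
  have hMeq : M * rho dL D n₀ = ‖f x₀ - f y₀‖ := div_mul_cancel₀ _ hρ₀pos.ne'
  set u := f x₀ - f y₀ with hu_def
  have huabs : 0 < ‖u‖ := by
    rw [← hMeq]; positivity
  have hu : u ≠ 0 := by simpa using huabs.ne'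
  -- Lipschitz property
  have hLip : ∀ v w : S, ‖f v - f w‖ ≤ M * rho dL D (G.dist v w) := by
    intro v w
    rcases eq_or_ne v w with h | h
    · subst h
      simp [SimpleGraph.dist_self, rho_zero]
    · have h1 := hp₀ (v, w) (Finset.mem_univ _)
      have h2 : 0 < rho dL D (G.dist v w) := hρpos (hconn.pos_dist_of_ne h)
      rw [div_le_iff₀ h2] at h1
      simpa using h1
  -- eigen-equation identity
  have hμu : μ * u = (∑ z, (J x₀ z : ℂ) * ((f y₀ - f z) + u))
      + (∑ z, (J y₀ z : ℂ) * ((f z - f x₀) + u)) := by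
    have hx := heq x₀
    have hy := heq y₀
    have e1 : (∑ z, (J x₀ z : ℂ) * ((f y₀ - f z) + u))
        = -(∑ z, (J x₀ z : ℂ) * (f z - f x₀)) := by
      rw [← Finset.sum_neg_distrib]
      exact Finset.sum_congr rfl fun z _ => by rw [hu_def]; ring
    have e2 : (∑ z, (J y₀ z : ℂ) * ((f z - f x₀) + u))
        = ∑ z, (J y₀ z : ℂ) * (f z - f y₀) := by
      exact Finset.sum_congr rfl fun z _ => by rw [hu_def]; ring
    rw [e1, e2, hx]
    rw [hu_def, mul_sub, ← hy]
    ring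
  -- real-part lower bound per term
  have hlb : ∀ (c : ℝ) (v : ℂ) (r : ℝ), 0 ≤ c → ‖v‖ ≤ r →
      c * (Complex.normSq u - ‖u‖ * r)
        ≤ ((starRingEnd ℂ) u * ((c : ℂ) * (v + u))).re := by
    intro c v r hc hvr
    have h1 : (starRingEnd ℂ) u * ((c:ℂ) * (v + u))
        = (c:ℂ) * ((starRingEnd ℂ) u * v) + (c:ℂ) * ((starRingEnd ℂ) u * u) := by ring
    have h2 : (starRingEnd ℂ) u * u = (Complex.normSq u : ℂ) := by
      rw [mul_comm, Complex.mul_conj]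
    rw [h1, h2]
    simp only [Complex.add_re, Complex.re_ofReal_mul, Complex.ofReal_re]
    have h3 : -(‖u‖ * ‖v‖) ≤ ((starRingEnd ℂ) u * v).re := by
      have h4 := (abs_le.1 (Complex.abs_re_le_norm ((starRingEnd ℂ) u * v))).1
      rwa [norm_mul, Complex.norm_conj] at h4
    have h5 : ‖u‖ * ‖v‖ ≤ ‖u‖ * r :=
      mul_le_mul_of_nonneg_left hvr huabs.le
    nlinarith [hc, h3, h5]
  -- assemble
  have hre1 : μ.re * Complex.normSq u = ((starRingEnd ℂ) u * (μ * u)).re := by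
    have h : (starRingEnd ℂ) u * (μ * u) = μ * (u * (starRingEnd ℂ) u) := by ring
    rw [h, Complex.mul_conj]
    simp [Complex.mul_re]
  have hbound1 : ∀ z, (J x₀ z) * (Complex.normSq u - ‖u‖ * (M * rho dL D (G.dist z y₀)))
      ≤ ((starRingEnd ℂ) u * ((J x₀ z : ℂ) * ((f y₀ - f z) + u))).re := by
    intro z
    apply hlb _ _ _ (hJnn _ _)
    calc ‖f y₀ - f z‖ ≤ M * rho dL D (G.dist y₀ z) := hLip y₀ z
      _ = M * rho dL D (G.dist z y₀) := by rw [SimpleGraph.dist_comm]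
  have hbound2 : ∀ z, (J y₀ z) * (Complex.normSq u - ‖u‖ * (M * rho dL D (G.dist z x₀)))
      ≤ ((starRingEnd ℂ) u * ((J y₀ z : ℂ) * ((f z - f x₀) + u))).re := by
    intro z
    exact hlb _ _ _ (hJnn _ _) (hLip z x₀)
  -- sum the bounds
  have hmain : (∑ z, (J x₀ z) * (Complex.normSq u - ‖u‖ * (M * rho dL D (G.dist z y₀))))
      + (∑ z, (J y₀ z) * (Complex.normSq u - ‖u‖ * (M * rho dL D (G.dist z x₀))))
      ≤ μ.re * Complex.normSq u := by
    rw [hre1, hμu, mul_add]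
    rw [Finset.mul_sum, Finset.mul_sum, Complex.add_re, Complex.re_sum, Complex.re_sum]
    exact add_le_add (Finset.sum_le_sum fun z _ => hbound1 z)
      (Finset.sum_le_sum fun z _ => hbound2 z)
  -- apply the key lemma
  have hkey1 : ∑ z, J x₀ z * rho dL D (G.dist z y₀)
      ≤ (∑ z, J x₀ z) * rho dL D n₀ - lamstar / dL :=
    key_lemma G hconn D hD2 hDub J hJnn hJadj lamstar dL hstarpos hdL2 hlam_ge hJle hx₀y₀
  have hkey2 : ∑ z, J y₀ z * rho dL D (G.dist z x₀)
      ≤ (∑ z, J y₀ z) * rho dL D n₀ - lamstar / dL := by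
    have h := key_lemma G hconn D hD2 hDub J hJnn hJadj lamstar dL hstarpos hdL2 hlam_ge hJle
      (Ne.symm hx₀y₀)
    have e : G.dist y₀ x₀ = n₀ := by rw [SimpleGraph.dist_comm, ← hn₀]
    rwa [e] at h
  -- expand sums
  have hexp1 : (∑ z, (J x₀ z) * (Complex.normSq u - ‖u‖ * (M * rho dL D (G.dist z y₀))))
      = (∑ z, J x₀ z) * Complex.normSq u
        - ‖u‖ * M * (∑ z, J x₀ z * rho dL D (G.dist z y₀)) := by
    rw [Finset.sum_mul, Finset.mul_sum, ← Finset.sum_sub_distrib]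
    exact Finset.sum_congr rfl fun z _ => by ring
  have hexp2 : (∑ z, (J y₀ z) * (Complex.normSq u - ‖u‖ * (M * rho dL D (G.dist z x₀))))
      = (∑ z, J y₀ z) * Complex.normSq u
        - ‖u‖ * M * (∑ z, J y₀ z * rho dL D (G.dist z x₀)) := by
    rw [Finset.sum_mul, Finset.mul_sum, ← Finset.sum_sub_distrib]
    exact Finset.sum_congr rfl fun z _ => by ring
  have huM : 0 ≤ ‖u‖ * M := by positivity
  have hnormSq : Complex.normSq u = ‖u‖ * (M * rho dL D n₀) := by
    rw [hMeq, Complex.normSq_eq_norm_sq, sq]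
  -- combine
  have hfinal : ‖u‖ * M * (2 * lamstar / dL) ≤ μ.re * Complex.normSq u := by
    have h1 := mul_le_mul_of_nonneg_left hkey1 huM
    have h2 := mul_le_mul_of_nonneg_left hkey2 huM
    rw [hexp1, hexp2] at hmain
    have h3 : ‖u‖ * M * rho dL D n₀ = Complex.normSq u := by
      rw [hnormSq]; ring
    have h1' : ‖u‖ * M * (∑ z, J x₀ z * rho dL D (G.dist z y₀))
        ≤ (∑ z, J x₀ z) * Complex.normSq u - ‖u‖ * M * (lamstar / dL) := by
      calc ‖u‖ * M * (∑ z, J x₀ z * rho dL D (G.dist z y₀))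
          ≤ ‖u‖ * M * ((∑ z, J x₀ z) * rho dL D n₀ - lamstar / dL) := h1
        _ = (∑ z, J x₀ z) * (‖u‖ * M * rho dL D n₀)
            - ‖u‖ * M * (lamstar / dL) := by ring
        _ = (∑ z, J x₀ z) * Complex.normSq u - ‖u‖ * M * (lamstar / dL) := by rw [h3]
    have h2' : ‖u‖ * M * (∑ z, J y₀ z * rho dL D (G.dist z x₀))
        ≤ (∑ z, J y₀ z) * Complex.normSq u - ‖u‖ * M * (lamstar / dL) := by
      calc ‖u‖ * M * (∑ z, J y₀ z * rho dL D (G.dist z x₀))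
          ≤ ‖u‖ * M * ((∑ z, J y₀ z) * rho dL D n₀ - lamstar / dL) := h2
        _ = (∑ z, J y₀ z) * (‖u‖ * M * rho dL D n₀)
            - ‖u‖ * M * (lamstar / dL) := by ring
        _ = (∑ z, J y₀ z) * Complex.normSq u - ‖u‖ * M * (lamstar / dL) := by rw [h3]
    have hsum := add_le_add h1' h2'
    clear_value u M n₀ x₀ y₀
    ring_nf at hsum hmain ⊢
    linarith [hsum, hmain]
  -- conclude
  set SD := (∑ k ∈ Finset.Icc 1 D, (dL - 1) ^ k) - (D:ℝ) with hSDdef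
  have hSD : 0 < SD := by
    rw [hSDdef, sub_pos]
    have h1 : ∀ k ∈ Finset.Icc 1 D, (1:ℝ) < (dL - 1) ^ k := by
      intro k hk
      rw [Finset.mem_Icc] at hk
      exact one_lt_pow₀ (by linarith) (by omega)
    calc (D:ℝ) = ∑ _k ∈ Finset.Icc 1 D, (1:ℝ) := by simp [Nat.card_Icc]
      _ < ∑ k ∈ Finset.Icc 1 D, (dL - 1) ^ k :=
          Finset.sum_lt_sum_of_nonempty ⟨1, by simp; omega⟩ h1
  set κ := 2 * lamstar * (dL - 2) / (dL * SD) with hκdef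
  have hκpos : 0 < κ := by
    apply div_pos (by nlinarith) (by positivity)
  have hκρD : κ * rho dL D D = 2 * lamstar / dL := by
    have hne1 : SD ≠ 0 := hSD.ne'
    have hne2 : dL ≠ 0 := hdLpos.ne'
    have hne3 : dL - 2 ≠ 0 := by intro h; nlinarith
    rw [hκdef, rho_D hdL2, ← hSDdef, div_mul_div_comm, div_eq_div_iff (by positivity) hne2]
    ring
  have hρ₀D : rho dL D n₀ ≤ rho dL D D := rho_mono hdL2 (hDub x₀ y₀)
  have hchain : κ * Complex.normSq u ≤ μ.re * Complex.normSq u := by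
    calc κ * Complex.normSq u = ‖u‖ * M * (κ * rho dL D n₀) := by
          rw [hnormSq]; ring
      _ ≤ ‖u‖ * M * (κ * rho dL D D) := by
          apply mul_le_mul_of_nonneg_left _ huM
          exact mul_le_mul_of_nonneg_left hρ₀D hκpos.le
      _ = ‖u‖ * M * (2 * lamstar / dL) := by rw [hκρD]
      _ ≤ μ.re * Complex.normSq u := hfinal
  have hnsq : 0 < Complex.normSq u := Complex.normSq_pos.2 hu
  calc 2 * lamstar * (dL - 2) / (dL * ((∑ k ∈ Finset.Icc 1 D, (dL - 1) ^ k) - D)) = κ := by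
        rw [hκdef, hSDdef]
    _ ≤ μ.re := le_of_mul_le_mul_right (by linarith [hchain]) hnsq
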